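/- Let G be an abelian group with infinitely many finite-index subgroups. Then the cardinality of the set of finite-index subgroups of G equals the cardinality of the set of finite-index subgroups N with G/N cyclic. -/

import Mathlib

open AddSubgroup

private lemma exists_cyclic_family {G : Type*} [AddCommGroup G] (N : AddSubgroup G)
    (hN : N.FiniteIndex) :
    ∃ (ι : Type) (_ : Fintype ι) (M : ι → AddSubgroup G),
      (∀ i, (M i).FiniteIndex ∧ IsAddCyclic (G ⧸ M i)) ∧ (⨅ i, M i) = N := by
  classical
  haveI := hN
  haveI : Finite (G ⧸ N) := AddSubgroup.finite_quotient_of_finiteIndex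
  obtain ⟨ι, _, n, hn, ⟨e⟩⟩ := AddCommGroup.equiv_directSum_zmod_of_finite' (G ⧸ N)
  let φ : ∀ i, G →+ ZMod (n i) := fun i =>
    ((DFinsupp.evalAddMonoidHom i).comp e.toAddMonoidHom).comp (QuotientAddGroup.mk' N)
  have hle : ∀ i, N ≤ (φ i).ker := by
    intro i x hx
    simp [φ, AddMonoidHom.mem_ker, (QuotientAddGroup.eq_zero_iff x).mpr hx]
  refine ⟨ι, inferInstance, fun i => (φ i).ker, fun i => ⟨?_, ?_⟩, ?_⟩
  · exact finiteIndex_of_le (hle i)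
  · have : G ⧸ (φ i).ker ≃+ (φ i).range := QuotientAddGroup.quotientKerEquivRange (φ i)
    exact isAddCyclic_of_surjective this.symm this.symm.surjective
  · ext x
    simp only [AddSubgroup.mem_iInf, AddMonoidHom.mem_ker]
    constructor
    · intro hx
      rw [← QuotientAddGroup.eq_zero_iff]
      have h0 : e ((QuotientAddGroup.mk' N) x) = 0 := DFinsupp.ext fun i => hx i
      have := e.injective (h0.trans (map_zero e).symm)
      simpa using this
    · intro hx i
      simp [φ, (QuotientAddGroup.eq_zero_iff x).mpr hx]

/-- If G has infinitely many finite-index subgroups, their number equals the number of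
finite-index subgroups with cyclic quotient. -/
theorem card_finiteIndex_eq_card_cyclic_quotient (G : Type*) [AddCommGroup G]
    (h : {N : AddSubgroup G | N.FiniteIndex}.Infinite) :
    Cardinal.mk {N : AddSubgroup G // N.FiniteIndex} =
      Cardinal.mk {N : AddSubgroup G // N.FiniteIndex ∧ IsAddCyclic (G ⧸ N)} := by
  classical
  set T := {N : AddSubgroup G // N.FiniteIndex ∧ IsAddCyclic (G ⧸ N)}
  -- injection from all finite-index subgroups into Finset T
  have key : ∀ N : {N : AddSubgroup G // N.FiniteIndex},
      ∃ s : Finset T, s.inf (fun t => t.1) = N.1 := by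
    rintro ⟨N, hN⟩
    obtain ⟨ι, _, M, hM, hinf⟩ := exists_cyclic_family N hN
    refine ⟨Finset.univ.image (fun i => (⟨M i, hM i⟩ : T)), ?_⟩
    rw [Finset.inf_image]
    simp only [Function.comp]
    rw [← hinf]
    exact (Finset.inf_univ_eq_iInf _).trans rfl
  choose f hf using key
  have hfinj : Function.Injective f := by
    intro a b hab
    have : a.1 = b.1 := by rw [← hf a, ← hf b, hab]
    exact Subtype.ext this
  have h1 : Cardinal.mk {N : AddSubgroup G // N.FiniteIndex} ≤ Cardinal.mk (Finset T) :=
    Cardinal.mk_le_of_injective hfinj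
  have hTinf : Infinite T := by
    by_contra hfin
    rw [not_infinite_iff_finite] at hfin
    haveI := hfin
    haveI := Fintype.ofFinite T
    haveI : Finite (Finset T) := Finite.of_fintype _
    exact h (Set.finite_coe_iff.mp (Finite.of_injective f hfinj))
  haveI := hTinf
  have h2 : Cardinal.mk (Finset T) = Cardinal.mk T := Cardinal.mk_finset_of_infinite T
  have h3 : Cardinal.mk T ≤ Cardinal.mk {N : AddSubgroup G // N.FiniteIndex} := by
    refine Cardinal.mk_le_of_injective
      (f := fun t : T => (⟨t.1, t.2.1⟩ : {N : AddSubgroup G // N.FiniteIndex})) ?_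
    intro a b hab
    simp only [Subtype.mk.injEq] at hab
    exact Subtype.ext hab
  exact le_antisymm (h1.trans h2.le) h3
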